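/- Fix β > 0, a, b ∈ ℝ with a ≠ 0, and d₁ < d₂. For r ∈ ℕ, let Ω_r = { (d₂-d₁) Σ_{i=1}^{r} q_i 2^{-i} + d₁ : q_i ∈ {0,1} }. Then the Boltzmann distributions B(β, Ω_r, (ax-b)²) converge in distribution, as r → ∞, to the truncated normal distribution N(b/a, 1/(2a²β²), d₁, d₂), i.e. the distribution with density proportional to e^{-(t - b/a)² a² β²} on (d₁, d₂) and zero outside. -/

import Mathlib

open MeasureTheory Filter
open scoped NNReal ENNReal

open scoped Classical in
/-- The set `{ (d₂-d₁) Σ_{i=1}^{r} q_i 2^{-i} + d₁ : q_i ∈ {0,1} }`. -/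
noncomputable def omegaSetTrunc (d₁ d₂ : ℝ) (r : ℕ) : Finset ℝ :=
  (Finset.Icc 1 r).powerset.image fun S : Finset ℕ => (d₂ - d₁) * ∑ i ∈ S, (2 : ℝ) ^ (-(i : ℤ)) + d₁

/-- The Boltzmann distribution on a finite set `S` with inverse-temperature parameter `β` and
target function `H`: the probability of `x ∈ S` is `e^{-β²H(x)} / Σ_{y∈S} e^{-β²H(y)}`. -/
noncomputable def boltzmann (β : ℝ) (S : Finset ℝ) (H : ℝ → ℝ) : Measure ℝ :=
  ∑ x ∈ S,
    (ENNReal.ofReal (Real.exp (-β ^ 2 * H x) / ∑ y ∈ S, Real.exp (-β ^ 2 * H y))) •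
      Measure.dirac x

/-- The truncated normal distribution `N(μ, v, d₁, d₂)` with mean parameter `μ`, variance
parameter `v`, truncated to `(d₁, d₂)`: density proportional to `e^{-(t-μ)²/(2v)} 𝟙_{(d₁,d₂)}`. -/
noncomputable def truncGaussian (μ v d₁ d₂ : ℝ) : Measure ℝ :=
  volume.withDensity fun t =>
    ENNReal.ofReal
      (Set.indicator (Set.Ioo d₁ d₂)
        (fun t => Real.exp (-(t - μ) ^ 2 / (2 * v)) /
          ∫ s in Set.Ioo d₁ d₂, Real.exp (-(s - μ) ^ 2 / (2 * v))) t)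

section Aux

open Topology

/-- Riemann sums of a continuous function converge to its integral. -/
lemma riemann_sum_tendsto (φ : ℝ → ℝ) (hφ : Continuous φ) {d₁ d₂ : ℝ} (hd : d₁ < d₂) :
    Tendsto (fun n : ℕ => ∑ k ∈ Finset.range n,
        φ (d₁ + (d₂ - d₁) * k / n) * ((d₂ - d₁) / n))
      atTop (𝓝 (∫ t in Set.Ioo d₁ d₂, φ t)) := by
  have hI : ∫ t in Set.Ioo d₁ d₂, φ t = ∫ t in d₁..d₂, φ t := by
    rw [intervalIntegral.integral_of_le hd.le, MeasureTheory.integral_Ioc_eq_integral_Ioo]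
  rw [hI, Metric.tendsto_atTop]
  intro ε hε
  have hdd : (0:ℝ) < d₂ - d₁ := by linarith
  set ε' : ℝ := ε / (2 * (d₂ - d₁)) with hε'def
  have hε' : 0 < ε' := by positivity
  have huc : UniformContinuousOn φ (Set.Icc d₁ d₂) :=
    (isCompact_Icc).uniformContinuousOn_of_continuous hφ.continuousOn
  obtain ⟨δ, hδ, hu⟩ := Metric.uniformContinuousOn_iff.mp huc ε' hε'
  obtain ⟨N₀, hN₀⟩ := exists_nat_gt ((d₂ - d₁) / δ)
  refine ⟨max N₀ 1, fun n hn => ?_⟩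
  have hn1 : 1 ≤ n := le_trans (le_max_right _ _) hn
  have hnN : (N₀ : ℝ) ≤ n := Nat.cast_le.mpr (le_trans (le_max_left _ _) hn)
  have hnpos : (0:ℝ) < n := by exact_mod_cast hn1
  set h : ℝ := (d₂ - d₁) / n with hh
  have hhpos : 0 < h := by positivity
  have hhδ : h < δ := by
    rw [hh, div_lt_iff₀ hnpos]
    have : (d₂ - d₁) / δ < n := lt_of_lt_of_le hN₀ hnN
    calc d₂ - d₁ = ((d₂ - d₁) / δ) * δ := by field_simp
    _ < n * δ := by apply mul_lt_mul_of_pos_right this hδ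
    _ = δ * n := mul_comm _ _
  set p : ℕ → ℝ := fun k => d₁ + (d₂ - d₁) * k / n with hp
  have hpk : ∀ k, p (k+1) - p k = h := by
    intro k; simp only [hp, hh]; push_cast; ring
  have hmono : ∀ k, p k ≤ p (k+1) := fun k => by
    have := hpk k; nlinarith [hhpos]
  have hpmem : ∀ k ≤ n, p k ∈ Set.Icc d₁ d₂ := by
    intro k hk
    constructor
    · simp only [hp]
      have : 0 ≤ (d₂ - d₁) * k / n := by positivity
      linarith
    · simp only [hp]
      have hkn : (k:ℝ) ≤ n := by exact_mod_cast hk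
      rw [← sub_nonneg]
      have : (d₂ - d₁) * k / n ≤ (d₂ - d₁) := by
        rw [div_le_iff₀ hnpos]
        nlinarith
      linarith
  have hint : ∀ k < n, IntervalIntegrable φ volume (p k) (p (k+1)) :=
    fun k _ => hφ.intervalIntegrable _ _
  have hsplit : ∫ t in d₁..d₂, φ t = ∑ k ∈ Finset.range n, ∫ t in p k..p (k+1), φ t := by
    rw [intervalIntegral.sum_integral_adjacent_intervals hint]
    congr 1
    · simp [hp]
    · simp only [hp]; field_simp; ring
  have hterm : ∀ k ∈ Finset.range n,
      |φ (p k) * ((d₂ - d₁)/n) - ∫ t in p k..p (k+1), φ t| ≤ ε' * h := by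
    intro k hk
    rw [Finset.mem_range] at hk
    have h1 : φ (p k) * ((d₂ - d₁)/n) = ∫ _ in p k..p (k+1), φ (p k) := by
      rw [intervalIntegral.integral_const, hpk k, smul_eq_mul]; rw [← hh]; ring
    rw [h1, ← intervalIntegral.integral_sub (by exact intervalIntegrable_const) (hint k hk)]
    have := intervalIntegral.norm_integral_le_of_norm_le_const
      (f := fun t => φ (p k) - φ t) (a := p k) (b := p (k+1)) (C := ε')
      (fun t ht => ?_)
    · rw [Real.norm_eq_abs] at this
      calc |∫ t in p k..p (k+1), (φ (p k) - φ t)| ≤ ε' * |p (k+1) - p k| := this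
      _ = ε' * h := by rw [hpk k, abs_of_pos hhpos]
    · rw [Set.uIoc_of_le (hmono k)] at ht
      have hpkm : p k ∈ Set.Icc d₁ d₂ := hpmem k hk.le
      have hpk1 : p (k+1) ∈ Set.Icc d₁ d₂ := hpmem (k+1) hk
      have htm : t ∈ Set.Icc d₁ d₂ :=
        ⟨le_trans hpkm.1 ht.1.le, le_trans ht.2 hpk1.2⟩
      have hdist : dist (φ (p k)) (φ t) < ε' := by
        apply hu _ hpkm _ htm
        rw [Real.dist_eq]
        have h2 : t - p k ≤ h := by have := hpk k; linarith [ht.2]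
        have h3 : 0 < t - p k := by linarith [ht.1]
        rw [abs_of_nonpos (by linarith)]
        linarith
      rw [Real.norm_eq_abs, ← Real.dist_eq]
      exact hdist.le
  have key : |(∑ k ∈ Finset.range n, φ (p k) * ((d₂ - d₁)/n)) - ∫ t in d₁..d₂, φ t| ≤ ε/2 := by
    rw [hsplit, ← Finset.sum_sub_distrib]
    calc |∑ k ∈ Finset.range n, (φ (p k) * ((d₂ - d₁)/n) - ∫ t in p k..p (k+1), φ t)|
        ≤ ∑ k ∈ Finset.range n, |φ (p k) * ((d₂ - d₁)/n) - ∫ t in p k..p (k+1), φ t| :=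
          Finset.abs_sum_le_sum_abs _ _
      _ ≤ ∑ _k ∈ Finset.range n, ε' * h := Finset.sum_le_sum hterm
      _ = n * (ε' * h) := by rw [Finset.sum_const, Finset.card_range, nsmul_eq_mul]
      _ = ε / 2 := by
          rw [hε'def, hh]; field_simp
  rw [Real.dist_eq]
  calc |(∑ k ∈ Finset.range n, φ (d₁ + (d₂ - d₁) * k / n) * ((d₂ - d₁)/n)) -
        ∫ t in d₁..d₂, φ t| ≤ ε/2 := key
    _ < ε := by linarith

lemma two_zpow_div (j r : ℕ) (hj : j ≤ r) :
    (2:ℝ) ^ (j:ℤ) / (2:ℝ) ^ (r:ℤ) = (2:ℝ) ^ (-((r - j : ℕ) : ℤ)) := by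
  rw [div_eq_iff (by positivity), ← zpow_add₀ (two_ne_zero)]
  congr 1
  omega

/-- The dyadic grid description of `omegaSetTrunc`. -/
lemma omegaSetTrunc_eq (d₁ d₂ : ℝ) (r : ℕ) :
    omegaSetTrunc d₁ d₂ r =
      (Finset.range (2^r)).image (fun k : ℕ => d₁ + (d₂ - d₁) * k / ((2^r : ℕ) : ℝ)) := by
  ext x
  simp only [omegaSetTrunc, Finset.mem_image, Finset.mem_powerset, Finset.mem_range]
  constructor
  · rintro ⟨S, hS, rfl⟩
    refine ⟨∑ i ∈ S, 2^(r-i), ?_, ?_⟩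
    · have h1 : ∑ i ∈ S, 2^(r-i) ≤ ∑ i ∈ Finset.Icc 1 r, 2^(r-i) :=
        Finset.sum_le_sum_of_subset hS
      have h2 : ∑ i ∈ Finset.Icc 1 r, 2^(r-i) = ∑ j ∈ Finset.range r, 2^j := by
        refine Finset.sum_nbij' (fun i => r - i) (fun j => r - j) ?_ ?_ ?_ ?_ ?_
        · intro i hi; simp only [Finset.mem_Icc] at hi; simp only [Finset.mem_range]; omega
        · intro j hj; simp only [Finset.mem_range] at hj; simp only [Finset.mem_Icc]; omega
        · intro i hi; simp only [Finset.mem_Icc] at hi; show r - (r - i) = i; omega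
        · intro j hj; simp only [Finset.mem_range] at hj; show r - (r - j) = j; omega
        · intro i hi; rfl
      have h3 : ∑ j ∈ Finset.range r, 2^j < 2^r := by
        have := Nat.geomSum_eq (le_refl 2) r
        simp at this
        rw [this]
        exact Nat.sub_lt (Nat.pow_pos (n := r) (by norm_num)) one_pos
      omega
    · have hsum : ∑ i ∈ S, (2:ℝ) ^ (-(i:ℤ)) = ((∑ i ∈ S, 2^(r-i) : ℕ) : ℝ) / ((2^r : ℕ) : ℝ) := by
        push_cast
        rw [Finset.sum_div]
        apply Finset.sum_congr rfl
        intro i hi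
        have hir : i ≤ r := (Finset.mem_Icc.mp (hS hi)).2
        have := two_zpow_div (r - i) r (by omega)
        rw [← zpow_natCast (2:ℝ) (r - i), ← zpow_natCast (2:ℝ) r, this]
        congr 1
        omega
      rw [hsum]; ring
  · rintro ⟨k, hk, rfl⟩
    set s := (Nat.bitIndices k).toFinset with hs
    have hjr : ∀ j ∈ s, j < r := by
      intro j hj
      have h2 : 2^j ≤ k := Nat.two_pow_le_of_mem_bitIndices (List.mem_toFinset.mp hj)
      have := lt_of_le_of_lt h2 hk
      exact (Nat.pow_lt_pow_iff_right (le_refl 2)).mp this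
    refine ⟨s.image (fun j => r - j), ?_, ?_⟩
    · intro i hi
      simp only [Finset.mem_image] at hi
      obtain ⟨j, hj, rfl⟩ := hi
      simp only [Finset.mem_Icc]
      have := hjr j hj
      omega
    · have hinj : ∀ j₁ ∈ s, ∀ j₂ ∈ s, r - j₁ = r - j₂ → j₁ = j₂ := by
        intro j₁ h₁ j₂ h₂ he
        have := hjr j₁ h₁; have := hjr j₂ h₂; omega
      rw [Finset.sum_image hinj]
      have hsum : ∑ j ∈ s, (2:ℝ) ^ (-((r - j : ℕ):ℤ)) = (k:ℝ) / ((2^r:ℕ):ℝ) := by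
        have : ∀ j ∈ s, (2:ℝ) ^ (-((r - j : ℕ):ℤ)) = (2:ℝ)^(j:ℤ) / (2:ℝ)^(r:ℤ) := by
          intro j hj
          rw [two_zpow_div j r (hjr j hj).le]
        rw [Finset.sum_congr rfl this, ← Finset.sum_div]
        have hK : ∑ j ∈ s, (2:ℝ)^(j:ℤ) = (k:ℝ) := by
          have := Finset.twoPowSum_toFinset_bitIndices k
          rw [← hs] at this
          calc ∑ j ∈ s, (2:ℝ)^(j:ℤ) = ((∑ j ∈ s, 2^j : ℕ):ℝ) := by push_cast; norm_num
            _ = (k:ℝ) := by rw [this]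
        rw [hK]
        push_cast
        norm_num
      rw [hsum]; ring

lemma sum_ratio (n : ℕ) (hn : 0 < n) (F G : ℕ → ℝ) (hG : ∀ k, 0 < G k) (h : ℝ) (hh : 0 < h) :
    ∑ k ∈ Finset.range n, (G k / ∑ j ∈ Finset.range n, G j) * F k
      = (∑ k ∈ Finset.range n, F k * G k * h) / ∑ k ∈ Finset.range n, G k * h := by
  have h1 : ∑ k ∈ Finset.range n, F k * G k * h = (∑ k ∈ Finset.range n, F k * G k) * h := by
    rw [Finset.sum_mul]
  have h2 : ∑ k ∈ Finset.range n, G k * h = (∑ k ∈ Finset.range n, G k) * h := by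
    rw [Finset.sum_mul]
  rw [h1, h2, mul_div_mul_right _ _ hh.ne', Finset.sum_div]
  exact Finset.sum_congr rfl fun k _ => by rw [div_mul_eq_mul_div, mul_comm (G k) (F k)]

/-- Integral of a bounded continuous function against a Boltzmann distribution. -/
lemma integral_boltzmann (β : ℝ) (S : Finset ℝ) (H : ℝ → ℝ)
    (f : BoundedContinuousFunction ℝ ℝ) :
    ∫ x, f x ∂(boltzmann β S H) =
      ∑ x ∈ S, (Real.exp (-β^2 * H x) / ∑ y ∈ S, Real.exp (-β^2 * H y)) * f x := by
  rw [boltzmann, integral_finset_sum_measure (fun x _ =>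
    (f.integrable _).smul_measure ENNReal.ofReal_ne_top)]
  apply Finset.sum_congr rfl
  intro x hx
  rw [integral_smul_measure, integral_dirac]
  have hZ : 0 < ∑ y ∈ S, Real.exp (-β^2 * H y) :=
    Finset.sum_pos (fun y _ => Real.exp_pos _) ⟨x, hx⟩
  rw [ENNReal.toReal_ofReal (div_nonneg (Real.exp_pos _).le hZ.le), smul_eq_mul]

/-- Integral of a bounded continuous function against a truncated Gaussian. -/
lemma integral_truncGaussian (μ v d₁ d₂ : ℝ)
    (hZ : 0 < ∫ s in Set.Ioo d₁ d₂, Real.exp (-(s - μ)^2 / (2*v)))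
    (f : BoundedContinuousFunction ℝ ℝ) :
    ∫ x, f x ∂(truncGaussian μ v d₁ d₂) =
      (∫ t in Set.Ioo d₁ d₂, f t * Real.exp (-(t - μ)^2 / (2*v))) /
        ∫ s in Set.Ioo d₁ d₂, Real.exp (-(s - μ)^2 / (2*v)) := by
  set Z : ℝ := ∫ s in Set.Ioo d₁ d₂, Real.exp (-(s - μ)^2 / (2*v)) with hZdef
  set ρ : ℝ → ℝ := Set.indicator (Set.Ioo d₁ d₂)
      (fun t => Real.exp (-(t - μ)^2 / (2*v)) / Z) with hρ
  have hρnn : ∀ t, 0 ≤ ρ t := by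
    intro t
    apply Set.indicator_nonneg
    intro t _
    exact div_nonneg (Real.exp_pos _).le hZ.le
  have hρmeas : Measurable ρ := by
    apply Measurable.indicator
    · exact (Continuous.div_const (by continuity) Z).measurable
    · exact measurableSet_Ioo
  have h1 : truncGaussian μ v d₁ d₂ =
      volume.withDensity fun t => ((Real.toNNReal (ρ t) : ℝ≥0) : ℝ≥0∞) := rfl
  rw [h1, integral_withDensity_eq_integral_smul hρmeas.real_toNNReal]
  have h2 : ∀ t, (Real.toNNReal (ρ t) : ℝ≥0) • f t = ρ t * f t := by
    intro t
    rw [NNReal.smul_def, smul_eq_mul, Real.coe_toNNReal _ (hρnn t)]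
  simp only [h2]
  have h3 : (fun t => ρ t * f t) =
      Set.indicator (Set.Ioo d₁ d₂) (fun t => (Real.exp (-(t - μ)^2 / (2*v)) / Z) * f t) := by
    funext t
    by_cases ht : t ∈ Set.Ioo d₁ d₂
    · rw [hρ, Set.indicator_of_mem ht, Set.indicator_of_mem ht]
    · rw [hρ, Set.indicator_of_notMem ht, Set.indicator_of_notMem ht, zero_mul]
  rw [h3, integral_indicator measurableSet_Ioo]
  rw [← integral_div]
  apply setIntegral_congr_fun measurableSet_Ioo
  intro t _
  simp only
  ring

end Aux

open Topology

/-- As `r → ∞`, the Boltzmann distributions `B(β, Ω_r, (ax-b)²)` converge in distribution to the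
truncated normal distribution `N(b/a, 1/(2a²β²), d₁, d₂)`. -/
theorem boltzmann_tendsto_truncGaussian
    (a b β d₁ d₂ : ℝ) (ha : a ≠ 0) (hβ : 0 < β) (hd : d₁ < d₂) :
    ∀ f : BoundedContinuousFunction ℝ ℝ,
      Tendsto
        (fun r => ∫ x, f x ∂(boltzmann β (omegaSetTrunc d₁ d₂ r) fun x => (a * x - b) ^ 2))
        atTop
        (nhds (∫ x, f x ∂(truncGaussian (b / a) (1 / (2 * a ^ 2 * β ^ 2)) d₁ d₂))) := by
  intro f
  have hdd : (0:ℝ) < d₂ - d₁ := by linarith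
  set g : ℝ → ℝ := fun t => Real.exp (-β^2 * (a*t - b)^2) with hg
  have hgc : Continuous g := by continuity
  have hgpos : ∀ t, 0 < g t := fun t => Real.exp_pos _
  -- the Gaussian density matches g
  have hmatch : ∀ t : ℝ, Real.exp (-(t - b/a)^2 / (2 * (1 / (2 * a ^ 2 * β ^ 2)))) = g t := by
    intro t
    rw [hg]
    congr 1
    field_simp
  set Z : ℝ := ∫ s in Set.Ioo d₁ d₂, g s with hZdef
  have hZpos : 0 < Z := by
    rw [hZdef, ← MeasureTheory.integral_Ioc_eq_integral_Ioo,
      ← intervalIntegral.integral_of_le hd.le]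
    exact intervalIntegral.intervalIntegral_pos_of_pos (hgc.intervalIntegrable _ _) hgpos hd
  -- RHS value
  have hRHS : ∫ x, f x ∂(truncGaussian (b / a) (1 / (2 * a ^ 2 * β ^ 2)) d₁ d₂) =
      (∫ t in Set.Ioo d₁ d₂, f t * g t) / Z := by
    rw [integral_truncGaussian _ _ _ _ (by
      simp only [hmatch]
      exact hZpos) f]
    simp only [hmatch]
    rfl
  rw [hRHS]
  -- LHS values
  have hLHS : ∀ r : ℕ,
      (∫ x, f x ∂(boltzmann β (omegaSetTrunc d₁ d₂ r) fun x => (a * x - b) ^ 2)) =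
      (∑ k ∈ Finset.range (2^r),
          (fun t => f t * g t) (d₁ + (d₂ - d₁) * k / ((2^r : ℕ):ℝ)) * ((d₂ - d₁) / ((2^r : ℕ):ℝ))) /
      (∑ k ∈ Finset.range (2^r),
          g (d₁ + (d₂ - d₁) * k / ((2^r : ℕ):ℝ)) * ((d₂ - d₁) / ((2^r : ℕ):ℝ))) := by
    intro r
    set n : ℕ := 2^r with hn
    have hnpos : (0:ℝ) < ((n:ℕ):ℝ) := by positivity
    set ι : ℕ → ℝ := fun k => d₁ + (d₂ - d₁) * k / ((n:ℕ):ℝ) with hι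
    have hιinj : ∀ k₁ ∈ Finset.range n, ∀ k₂ ∈ Finset.range n, ι k₁ = ι k₂ → k₁ = k₂ := by
      intro k₁ _ k₂ _ he
      rw [hι] at he
      simp only at he
      have : (k₁:ℝ) = k₂ := by
        have h := he
        field_simp at h
        have h2 : (d₂ - d₁) * (k₁:ℝ) = (d₂ - d₁) * k₂ := by linarith
        exact mul_left_cancel₀ hdd.ne' h2
      exact_mod_cast this
    rw [integral_boltzmann, omegaSetTrunc_eq, ← hn]
    simp only [← hι, Finset.sum_image hιinj]
    exact sum_ratio n (Nat.pow_pos (n := r) two_pos)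
      (fun k => f (d₁ + (d₂ - d₁) * k / ((n:ℕ):ℝ)))
      (fun k => g (d₁ + (d₂ - d₁) * k / ((n:ℕ):ℝ)))
      (fun k => hgpos _) _ (by exact div_pos hdd hnpos)
  simp only [hLHS]
  -- convergence
  have hpow : Tendsto (fun r : ℕ => 2^r) atTop atTop :=
    tendsto_pow_atTop_atTop_of_one_lt one_lt_two
  have hnum := (riemann_sum_tendsto (fun t => f t * g t)
    (f.continuous.mul hgc) hd).comp hpow
  have hden := (riemann_sum_tendsto g hgc hd).comp hpow
  exact Tendsto.div hnum hden hZpos.ne'
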